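/- Let 𝔭 be a prime ideal of 𝒪 containing the conductor 𝔣. Write 𝔣 = 𝔣̃·𝔤, where 𝔣̃ is the product of the exact powers of the prime ideals of 𝒪_K lying over 𝔭 occurring in the factorization of 𝔣 and 𝔤 is the complementary factor (so 𝔣̃ + 𝔤 = 𝒪_K). Let 𝒪̃ = 𝒪 + 𝔣̃ (an order in K with conductor 𝔣̃), and suppose 𝔭̃ is the unique prime ideal of 𝒪̃ containing 𝔣̃, with 𝔭̃ ∩ 𝒪 = 𝔭. Then the map x·𝒪_𝔭^× ↦ x·𝒪̃_𝔭̃^× is a well-defined isomorphism of monoids from (𝒪_𝔭 ∖ {0})/𝒪_𝔭^× onto (𝒪̃_𝔭̃ ∖ {0})/𝒪̃_𝔭̃^×. -/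
import Mathlib


open NumberField

set_option synthInstance.maxHeartbeats 1000000
set_option maxHeartbeats 1000000

variable {K : Type*} [Field K] [NumberField K]

/-- A subring `O ⊆ 𝓞 K` is an *order* in `K` if its field of fractions is `K`;
equivalently, every element of `𝓞 K` admits a nonzero integer multiple lying in `O`. -/
def Subring.IsOrder (O : Subring (𝓞 K)) : Prop :=
  ∀ x : 𝓞 K, ∃ n : ℤ, n ≠ 0 ∧ (n : 𝓞 K) * x ∈ O

/-- The conductor `𝔣 = {x ∈ 𝓞 K : x • 𝓞 K ⊆ O}` of a subring `O ⊆ 𝓞 K`,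
as an ideal of `𝓞 K`. -/
def conductorIdeal (O : Subring (𝓞 K)) : Ideal (𝓞 K) where
  carrier := {x : 𝓞 K | ∀ y : 𝓞 K, x * y ∈ O}
  add_mem' := by
    intro a b ha hb y
    simpa [add_mul] using O.add_mem (ha y) (hb y)
  zero_mem' := by
    intro y
    simpa using O.zero_mem
  smul_mem' := by
    intro c x hx y
    simpa [smul_eq_mul, mul_assoc, mul_comm, mul_left_comm] using hx (c * y)

/-- A commutative ring is *half-factorial* if every nonzero nonunit is a product of
irreducible elements, and any two factorizations of a nonzero nonunit into irreducibles
have the same length. -/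
def IsHalfFactorialRing (R : Type*) [CommRing R] : Prop :=
  (∀ a : R, a ≠ 0 → ¬ IsUnit a →
      ∃ l : Multiset R, (∀ b ∈ l, Irreducible b) ∧ l.prod = a) ∧
  (∀ a : R, a ≠ 0 → ¬ IsUnit a →
      ∀ l₁ l₂ : Multiset R, (∀ b ∈ l₁, Irreducible b) → (∀ b ∈ l₂, Irreducible b) →
        l₁.prod = a → l₂.prod = a → Multiset.card l₁ = Multiset.card l₂)

/-- The spec-map `𝔓 ↦ 𝔓 ∩ 𝒪` is a bijection between the nonzero prime ideals of `𝓞 K`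
and the nonzero prime ideals of `O`. -/
def SpecMapBijective (O : Subring (𝓞 K)) : Prop :=
  Set.BijOn (fun P : Ideal (𝓞 K) => P.comap O.subtype)
    {P : Ideal (𝓞 K) | P.IsPrime ∧ P ≠ ⊥} {p : Ideal O | p.IsPrime ∧ p ≠ ⊥}

/-- The localization `𝒪_𝔭` of `O` at a prime ideal `𝔭` of `O`, realized as a subring
of `K`. -/
def locO (O : Subring (𝓞 K)) (p : Ideal O) (hp : p.IsPrime) : Subring K where
  carrier := {x : K | ∃ a s : O, s ∉ p ∧
    x * algebraMap (𝓞 K) K (s : 𝓞 K) = algebraMap (𝓞 K) K (a : 𝓞 K)}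
  one_mem' := ⟨1, 1, fun h => hp.ne_top ((Ideal.eq_top_iff_one _).mpr h), by simp⟩
  zero_mem' := ⟨0, 1, fun h => hp.ne_top ((Ideal.eq_top_iff_one _).mpr h), by simp⟩
  mul_mem' := by
    rintro x y ⟨a, s, hs, hx⟩ ⟨b, t, ht, hy⟩
    refine ⟨a * b, s * t, fun h => ((hp.mem_or_mem h).elim hs ht), ?_⟩
    push_cast [map_mul]
    calc x * y * (algebraMap (𝓞 K) K s * algebraMap (𝓞 K) K t)
        = (x * algebraMap (𝓞 K) K s) * (y * algebraMap (𝓞 K) K t) := by ring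
      _ = _ := by rw [hx, hy]
  add_mem' := by
    rintro x y ⟨a, s, hs, hx⟩ ⟨b, t, ht, hy⟩
    refine ⟨a * t + b * s, s * t, fun h => ((hp.mem_or_mem h).elim hs ht), ?_⟩
    push_cast [map_mul, map_add]
    calc (x + y) * (algebraMap (𝓞 K) K s * algebraMap (𝓞 K) K t)
        = (x * algebraMap (𝓞 K) K s) * algebraMap (𝓞 K) K t
          + (y * algebraMap (𝓞 K) K t) * algebraMap (𝓞 K) K s := by ring
      _ = _ := by rw [hx, hy]
  neg_mem' := by
    rintro x ⟨a, s, hs, hx⟩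
    exact ⟨-a, s, hs, by push_cast [map_neg]; rw [neg_mul, hx]⟩

/-- The localization `(𝒪_K)_𝔭 = 𝒪_K · (𝒪 ∖ 𝔭)⁻¹` of `𝓞 K` at the prime ideal `𝔭` of `O`
(the integral closure of `𝒪_𝔭`), realized as a subring of `K`. -/
def locOK (O : Subring (𝓞 K)) (p : Ideal O) (hp : p.IsPrime) : Subring K where
  carrier := {x : K | ∃ (a : 𝓞 K) (s : O), s ∉ p ∧
    x * algebraMap (𝓞 K) K (s : 𝓞 K) = algebraMap (𝓞 K) K a}
  one_mem' := ⟨1, 1, fun h => hp.ne_top ((Ideal.eq_top_iff_one _).mpr h), by simp⟩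
  zero_mem' := ⟨0, 1, fun h => hp.ne_top ((Ideal.eq_top_iff_one _).mpr h), by simp⟩
  mul_mem' := by
    rintro x y ⟨a, s, hs, hx⟩ ⟨b, t, ht, hy⟩
    refine ⟨a * b, s * t, fun h => ((hp.mem_or_mem h).elim hs ht), ?_⟩
    push_cast [map_mul]
    calc x * y * (algebraMap (𝓞 K) K s * algebraMap (𝓞 K) K t)
        = (x * algebraMap (𝓞 K) K s) * (y * algebraMap (𝓞 K) K t) := by ring
      _ = _ := by rw [hx, hy]
  add_mem' := by
    rintro x y ⟨a, s, hs, hx⟩ ⟨b, t, ht, hy⟩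
    refine ⟨a * t + b * s, s * t, fun h => ((hp.mem_or_mem h).elim hs ht), ?_⟩
    push_cast [map_mul, map_add]
    calc (x + y) * (algebraMap (𝓞 K) K s * algebraMap (𝓞 K) K t)
        = (x * algebraMap (𝓞 K) K s) * algebraMap (𝓞 K) K t
          + (y * algebraMap (𝓞 K) K t) * algebraMap (𝓞 K) K s := by ring
      _ = _ := by rw [hx, hy]
  neg_mem' := by
    rintro x ⟨a, s, hs, hx⟩
    exact ⟨-a, s, hs, by push_cast [map_neg]; rw [neg_mul, hx]⟩

lemma locO_le_locOK (O : Subring (𝓞 K)) (p : Ideal O) (hp : p.IsPrime) :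
    locO O p hp ≤ locOK O p hp := by
  rintro x ⟨a, s, hs, hx⟩
  exact ⟨(a : 𝓞 K), s, hs, hx⟩

/-- The subring `O + I` of `𝓞 K`, for a subring `O` and an ideal `I` of `𝓞 K`. -/
def orderPlus (O : Subring (𝓞 K)) (I : Ideal (𝓞 K)) : Subring (𝓞 K) where
  carrier := {x : 𝓞 K | ∃ a ∈ O, ∃ b ∈ I, x = a + b}
  one_mem' := ⟨1, O.one_mem, 0, I.zero_mem, by ring⟩
  zero_mem' := ⟨0, O.zero_mem, 0, I.zero_mem, by ring⟩
  mul_mem' := by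
    rintro x y ⟨a, ha, b, hb, rfl⟩ ⟨c, hc, d, hd, rfl⟩
    refine ⟨a * c, O.mul_mem ha hc, a * d + b * c + b * d,
      I.add_mem (I.add_mem (I.mul_mem_left a hd) (I.mul_mem_right c hb)) (I.mul_mem_left b hd), by ring⟩
  add_mem' := by
    rintro x y ⟨a, ha, b, hb, rfl⟩ ⟨c, hc, d, hd, rfl⟩
    exact ⟨a + c, O.add_mem ha hc, b + d, I.add_mem hb hd, by ring⟩
  neg_mem' := by
    rintro x ⟨a, ha, b, hb, rfl⟩
    exact ⟨-a, O.neg_mem ha, -b, I.neg_mem hb, by ring⟩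

lemma le_orderPlus (O : Subring (𝓞 K)) (I : Ideal (𝓞 K)) : O ≤ orderPlus O I :=
  fun a ha => ⟨a, ha, 0, I.zero_mem, by ring⟩

/-- The order `ℤ + f·𝒪_K` in `K`. -/
def zOrder (f : ℕ) : Subring (𝓞 K) where
  carrier := {x : 𝓞 K | ∃ (a : ℤ) (b : 𝓞 K), x = (a : 𝓞 K) + (f : 𝓞 K) * b}
  one_mem' := ⟨1, 0, by push_cast; ring⟩
  zero_mem' := ⟨0, 0, by push_cast; ring⟩
  mul_mem' := by
    rintro x y ⟨a, b, rfl⟩ ⟨c, d, rfl⟩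
    exact ⟨a * c, (a : 𝓞 K) * d + (c : 𝓞 K) * b + (f : 𝓞 K) * b * d, by push_cast; ring⟩
  add_mem' := by
    rintro x y ⟨a, b, rfl⟩ ⟨c, d, rfl⟩
    exact ⟨a + c, b + d, by push_cast; ring⟩
  neg_mem' := by
    rintro x ⟨a, b, rfl⟩
    exact ⟨-a, -b, by push_cast; ring⟩

/-- The natural homomorphism `𝒪_K^× → (𝒪_K/𝔣)^×/(𝒪/𝔣)^×`: reduction modulo the
conductor `𝔣`, followed by the quotient by (the image of) `(𝒪/𝔣)^×`. -/
noncomputable def unitClassMap (O : Subring (𝓞 K)) :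
    (𝓞 K)ˣ →*
      ((𝓞 K ⧸ conductorIdeal O)ˣ ⧸
        (Units.map (Subring.map (Ideal.Quotient.mk (conductorIdeal O)) O).subtype.toMonoidHom).range) :=
  (QuotientGroup.mk' _).comp (Units.map (Ideal.Quotient.mk (conductorIdeal O)).toMonoidHom)


/-- A `MulEquiv` of commutative monoids induces a `MulEquiv` of their monoids of associates. -/
def assocCongr {M N : Type*} [CommMonoid M] [CommMonoid N] (e : M ≃* N) :
    Associates M ≃* Associates N where
  toFun := Quotient.map e fun a b ⟨u, hu⟩ =>
    ⟨Units.map e.toMonoidHom u, by simp [← hu, Units.coe_map, ← map_mul]⟩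
  invFun := Quotient.map e.symm fun a b ⟨u, hu⟩ =>
    ⟨Units.map e.symm.toMonoidHom u, by simp [← hu, Units.coe_map, ← map_mul]⟩
  left_inv := by
    rintro ⟨a⟩
    show Associates.mk (e.symm (e a)) = Associates.mk a
    rw [e.symm_apply_apply]
  right_inv := by
    rintro ⟨a⟩
    show Associates.mk (e (e.symm a)) = Associates.mk a
    rw [e.apply_symm_apply]
  map_mul' := by
    rintro ⟨a⟩ ⟨b⟩
    show Associates.mk (e (a * b)) = Associates.mk (e a) * Associates.mk (e b)
    rw [map_mul, Associates.mk_mul_mk]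

lemma assocCongr_mk {M N : Type*} [CommMonoid M] [CommMonoid N] (e : M ≃* N) (a : M) :
    assocCongr e (Associates.mk a) = Associates.mk (e a) := rfl

lemma mem_conductorIdeal_iff {K : Type*} [Field K] [NumberField K] {O : Subring (𝓞 K)}
    {x : 𝓞 K} : x ∈ conductorIdeal O ↔ ∀ y, x * y ∈ O := Iff.rfl

/-- **Lemma 3.1.** Passing from an order to the irreducible component at `𝔭` preserves
the reduced monoid of the localization: the map `x·𝒪_𝔭^× ↦ x·𝒪̃_𝔭̃^×` is a well-defined
monoid isomorphism `(𝒪_𝔭∖{0})/𝒪_𝔭^× ≅ (𝒪̃_𝔭̃∖{0})/𝒪̃_𝔭̃^×` (stated here on the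
monoids of associates). -/
theorem reduced_monoid_iso_of_component (O : Subring (𝓞 K)) (hO : O.IsOrder)
    (p : Ideal O) (hp : p.IsPrime) (hpf : (conductorIdeal O).comap O.subtype ≤ p)
    (ft g : Ideal (𝓞 K))
    (hfg : conductorIdeal O = ft * g) (hcop : ft ⊔ g = ⊤)
    (hft : ∀ P : Ideal (𝓞 K), P.IsPrime → ft ≤ P → P.comap O.subtype = p)
    (hg : ∀ P : Ideal (𝓞 K), P.IsPrime → g ≤ P → P.comap O.subtype ≠ p)
    (hcond : conductorIdeal (orderPlus O ft) = ft)
    (pt : Ideal (orderPlus O ft)) (hpt : pt.IsPrime)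
    (hptf : ft.comap (orderPlus O ft).subtype ≤ pt)
    (hptu : ∀ q : Ideal (orderPlus O ft), q.IsPrime →
      ft.comap (orderPlus O ft).subtype ≤ q → q = pt)
    (hptp : ∀ (x : 𝓞 K) (hx : x ∈ O) (hx' : x ∈ orderPlus O ft),
      (⟨x, hx'⟩ : orderPlus O ft) ∈ pt ↔ (⟨x, hx⟩ : O) ∈ p) :
    ∃ ψ : Associates ↥(locO O p hp) ≃* Associates ↥(locO (orderPlus O ft) pt hpt),
      ∀ (x : K) (h1 : x ∈ locO O p hp) (h2 : x ∈ locO (orderPlus O ft) pt hpt),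
        ψ (Associates.mk (⟨x, h1⟩ : ↥(locO O p hp))) =
          Associates.mk (⟨x, h2⟩ : ↥(locO (orderPlus O ft) pt hpt)) := by
  classical
  -- `𝓞 K` is integral over `O`
  haveI hint : Algebra.IsIntegral ↥O (𝓞 K) := by
    constructor
    intro x
    have h : IsIntegral ℤ x := IsIntegralClosure.isIntegral ℤ K x
    exact h.tower_top
  haveI := hp
  -- find `c ∈ O ∩ g` with `c ∉ p`
  have hle : ¬ g.comap O.subtype ≤ p := by
    intro hle
    obtain ⟨Q, hQge, hQprime, hQcomap⟩ :=
      Ideal.exists_ideal_over_prime_of_isIntegral p g hle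
    exact hg Q hQprime hQge hQcomap
  obtain ⟨c, hcg, hcp⟩ := SetLike.not_le_iff_exists.mp hle
  have hcg' : (c : 𝓞 K) ∈ g := hcg
  -- multiplying by `c` sends the bigger order into `O`
  have hcmul : ∀ y ∈ orderPlus O ft, (c : 𝓞 K) * y ∈ O := by
    rintro y ⟨u, hu, v, hv, rfl⟩
    have h1 : v * (c : 𝓞 K) ∈ conductorIdeal O := by
      rw [hfg]; exact Ideal.mul_mem_mul hv hcg'
    have h2 : (c : 𝓞 K) * v ∈ O := by
      have := (mem_conductorIdeal_iff.mp h1) 1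
      rwa [mul_one, mul_comm] at this
    have h3 : (c : 𝓞 K) * u ∈ O := O.mul_mem c.2 hu
    have : (c : 𝓞 K) * (u + v) = (c : 𝓞 K) * u + (c : 𝓞 K) * v := by ring
    rw [this]
    exact O.add_mem h3 h2
  have hcO' : (c : 𝓞 K) ∈ orderPlus O ft := le_orderPlus O ft c.2
  have hcpt : (⟨(c : 𝓞 K), hcO'⟩ : orderPlus O ft) ∉ pt := fun h =>
    hcp ((hptp (c : 𝓞 K) c.2 hcO').mp h)
  -- the two localizations agree
  have heq : locO O p hp = locO (orderPlus O ft) pt hpt := by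
    apply le_antisymm
    · rintro x ⟨a, s, hs, hx⟩
      exact ⟨⟨(a : 𝓞 K), le_orderPlus O ft a.2⟩, ⟨(s : 𝓞 K), le_orderPlus O ft s.2⟩,
        fun h => hs ((hptp (s : 𝓞 K) s.2 _).mp h), hx⟩
    · rintro x ⟨a, s, hs, hx⟩
      have haO : (c : 𝓞 K) * (a : 𝓞 K) ∈ O := hcmul _ a.2
      have hsO : (c : 𝓞 K) * (s : 𝓞 K) ∈ O := hcmul _ s.2
      have hsO' : (c : 𝓞 K) * (s : 𝓞 K) ∈ orderPlus O ft :=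
        (orderPlus O ft).mul_mem hcO' s.2
      refine ⟨⟨_, haO⟩, ⟨_, hsO⟩, ?_, ?_⟩
      · intro hmem
        have : (⟨(c : 𝓞 K) * (s : 𝓞 K), hsO'⟩ : orderPlus O ft) ∈ pt :=
          (hptp _ hsO hsO').mpr hmem
        have heq2 : (⟨(c : 𝓞 K) * (s : 𝓞 K), hsO'⟩ : orderPlus O ft) =
            ⟨(c : 𝓞 K), hcO'⟩ * s := rfl
        rw [heq2] at this
        rcases hpt.mem_or_mem this with h | h
        · exact hcpt h
        · exact hs h
      · show x * algebraMap (𝓞 K) K ((c : 𝓞 K) * (s : 𝓞 K)) =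
          algebraMap (𝓞 K) K ((c : 𝓞 K) * (a : 𝓞 K))
        rw [map_mul, map_mul, ← mul_assoc, mul_comm x, mul_assoc, hx]
  -- build the isomorphism from the equality of subrings
  refine ⟨assocCongr (RingEquiv.subringCongr heq).toMulEquiv, ?_⟩
  intro x h1 h2
  rw [assocCongr_mk]
  congr 1
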